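/- arXiv:math/0107084 — 3 statements merged into one kernel-verified Lean document; each statement's English description precedes it below -/
import Mathlib

section
/- Let $a, d$ be distinct positive reals with $ad = n$. Then $\int_1^{NP_1} \frac{dy}{y^2} \int_{-\infty}^\infty k\left(\frac{(NP-1)^2}{NP}\cdot\frac{x^2+y^2}{y^2}\right) dx = \frac{\ln NP_1}{(NP)^{1/2} - (NP)^{-1/2}}\, g(\ln NP)$, where $k(t) = (1 + t/4)^{-s}$ for real $s > 1$, $NP > 1$, $NP_1 > 1$, and $g(u) = \int_{w}^\infty k(t)\frac{dt}{\sqrt{t - w}}$ with $w = e^u + e^{-u} - 2$. -/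
open MeasureTheory

/-- The test function `k(t) = (1 + t/4)^{-s}`. -/
noncomputable def kfun (s t : ℝ) : ℝ := (1 + t / 4) ^ (-s)

/-- `g(u) = ∫_w^∞ k(t) (t-w)^{-1/2} dt` with `w = e^u + e^{-u} - 2`. -/
noncomputable def gfun (s u : ℝ) : ℝ :=
  ∫ t in Set.Ioi (Real.exp u + Real.exp (-u) - 2),
    kfun s t / Real.sqrt (t - (Real.exp u + Real.exp (-u) - 2))

/-- Translation of an integral over `Ioi`. -/
lemma shift_Ioi (a : ℝ) (f : ℝ → ℝ) :
    (∫ x in Set.Ioi a, f x) = ∫ x in Set.Ioi (0 : ℝ), f (x + a) := by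
  have A : MeasurableEmbedding (fun x : ℝ => x + a) :=
    (Homeomorph.addRight a).measurableEmbedding
  have h := A.setIntegral_map (μ := volume) f (Set.Ioi a)
  rw [MeasureTheory.map_add_right_eq_self (volume : Measure ℝ) a,
    Set.preimage_add_const_Ioi, sub_self] at h
  exact h

/-- The hyperbolic-term evaluation in the Selberg trace formula:
`∫_1^{NP₁} y^{-2} ∫_ℝ k((NP-1)²/NP · (x²+y²)/y²) dx dy
   = ln NP₁ / (√NP - 1/√NP) · g(ln NP)`. -/
theorem stmt_10 (s NP NP₁ : ℝ) (hs : 1 < s) (hNP : 1 < NP) (hNP₁ : 1 < NP₁) :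
    (∫ y in (1 : ℝ)..NP₁,
      (∫ x : ℝ, kfun s ((NP - 1) ^ 2 / NP * ((x ^ 2 + y ^ 2) / y ^ 2))) / y ^ 2) =
    Real.log NP₁ / (Real.sqrt NP - 1 / Real.sqrt NP) * gfun s (Real.log NP) := by
  have hNP0 : (0 : ℝ) < NP := lt_trans one_pos hNP
  set c : ℝ := NP + NP⁻¹ - 2 with hc
  have hsqNP : (Real.sqrt NP) ^ 2 = NP := Real.sq_sqrt hNP0.le
  have hsqNP1 : 1 < Real.sqrt NP := by
    nlinarith [Real.sqrt_nonneg NP]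
  have hsqpos : 0 < Real.sqrt NP - 1 / Real.sqrt NP := by
    rw [sub_pos, div_lt_iff₀ (by linarith)]
    nlinarith
  have hceq : c = (Real.sqrt NP - 1 / Real.sqrt NP) ^ 2 := by
    have h0 : Real.sqrt NP ≠ 0 := by positivity
    field_simp [hc]
    rw [hsqNP, hc, sub_mul, add_mul, inv_mul_cancel₀ hNP0.ne']; ring
  have hcpos : 0 < c := by rw [hceq]; positivity
  have hsc : Real.sqrt c = Real.sqrt NP - 1 / Real.sqrt NP := by
    rw [hceq, Real.sqrt_sq hsqpos.le]
  have hscpos : 0 < Real.sqrt c := hsc ▸ hsqpos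
  set F : ℝ → ℝ := fun x => kfun s (c * (x ^ 2 + 1)) with hF
  set I : ℝ := ∫ x : ℝ, F x with hI
  -- Step 1: evaluate the inner integral for y in the interval
  have inner : ∀ y ∈ Set.uIcc (1 : ℝ) NP₁,
      ((∫ x : ℝ, kfun s ((NP - 1) ^ 2 / NP * ((x ^ 2 + y ^ 2) / y ^ 2))) / y ^ 2)
        = I * y⁻¹ := by
    intro y hy
    rw [Set.uIcc_of_le (le_of_lt hNP₁)] at hy
    have hy0 : (0 : ℝ) < y := lt_of_lt_of_le one_pos hy.1
    have harg : ∀ x : ℝ, (NP - 1) ^ 2 / NP * ((x ^ 2 + y ^ 2) / y ^ 2)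
        = c * ((x / y) ^ 2 + 1) := by
      intro x
      rw [hc]
      field_simp
      ring
    simp_rw [harg]
    have := MeasureTheory.Measure.integral_comp_div (g := F) (a := y)
    simp only [hF] at this ⊢
    rw [this, abs_of_pos hy0, smul_eq_mul, ← hI]
    field_simp
  -- Step 2: LHS equals I * log NP₁
  have hLHS : (∫ y in (1 : ℝ)..NP₁,
      (∫ x : ℝ, kfun s ((NP - 1) ^ 2 / NP * ((x ^ 2 + y ^ 2) / y ^ 2))) / y ^ 2)
      = I * Real.log NP₁ := by
    rw [intervalIntegral.integral_congr inner, intervalIntegral.integral_const_mul,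
      integral_inv (by rw [Set.uIcc_of_le (le_of_lt hNP₁)]; intro h; exact absurd h.1 (by norm_num)),
      div_one]
  -- Step 3: gfun s (log NP) = sqrt c * I
  have hgfun : gfun s (Real.log NP) = Real.sqrt c * I := by
    have hw : Real.exp (Real.log NP) + Real.exp (-Real.log NP) - 2 = c := by
      rw [Real.exp_log hNP0, Real.exp_neg, Real.exp_log hNP0]
    rw [gfun, hw]
    rw [shift_Ioi c (fun t => kfun s t / Real.sqrt (t - c))]
    simp only [add_sub_cancel_right]
    -- now: ∫ x in Ioi 0, kfun s (x + c) / sqrt x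
    rw [← integral_comp_rpow_Ioi_of_pos (g := fun t => kfun s (t + c) / Real.sqrt t)
      (p := 2) (by norm_num)]
    have h1 : ∀ x ∈ Set.Ioi (0 : ℝ),
        (2 * x ^ ((2 : ℝ) - 1)) • (kfun s (x ^ (2 : ℝ) + c) / Real.sqrt (x ^ (2 : ℝ)))
        = 2 * kfun s (x ^ 2 + c) := by
      intro x hx
      have hx0 : (0 : ℝ) < x := hx
      have hr2 : x ^ (2 : ℝ) = x ^ 2 := by
        rw [show (2 : ℝ) = ((2 : ℕ) : ℝ) by norm_num, Real.rpow_natCast]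
      have hr1 : x ^ ((2 : ℝ) - 1) = x := by
        norm_num
      rw [hr2, hr1, Real.sqrt_sq hx0.le, smul_eq_mul]
      field_simp
    rw [setIntegral_congr_fun measurableSet_Ioi h1]
    -- now: ∫ x in Ioi 0, 2 * kfun s (x^2 + c)
    set J : ℝ := ∫ x in Set.Ioi (0 : ℝ), F x with hJ
    have h2 : J = (Real.sqrt c)⁻¹ • ∫ x in Set.Ioi ((0 : ℝ) * Real.sqrt c),
        kfun s (x ^ 2 + c) := by
      rw [← integral_comp_mul_right_Ioi (g := fun x => kfun s (x ^ 2 + c)) 0 hscpos, hJ]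
      refine setIntegral_congr_fun measurableSet_Ioi (fun x hx => ?_)
      simp only [hF]
      congr 1
      have hxx : (x * Real.sqrt c) ^ 2 = c * x ^ 2 := by
        rw [mul_pow, Real.sq_sqrt hcpos.le]; ring
      rw [hxx]; ring
    rw [zero_mul, smul_eq_mul] at h2
    have h3 : (∫ x in Set.Ioi (0 : ℝ), kfun s (x ^ 2 + c)) = Real.sqrt c * J := by
      rw [h2, ← mul_assoc, mul_inv_cancel₀ hscpos.ne', one_mul]
    have h4 : I = 2 * J := by
      have hFeven : ∀ x : ℝ, F x = F |x| := fun x => by simp only [hF, sq_abs]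
      rw [hI, integral_congr_ae (Filter.Eventually.of_forall hFeven),
        integral_comp_abs (f := F), hJ]
    rw [integral_const_mul, h3, h4]
    ring
  rw [hLHS, hgfun, hsc]
  set d := Real.sqrt NP - 1 / Real.sqrt NP with hdd
  have hd : d ≠ 0 := ne_of_gt hsqpos
  field_simp
end

section
/- For $0 < \theta < \pi$ and real $s > 1$, with $k(t) = (1+t/4)^{-s}$: $\int_0^\infty \int_{-\infty}^\infty k\left(\frac{|z^2+1|^2}{y^2}\sin^2\theta\right) \frac{dx\,dy}{y^2} = \frac{\pi}{2\sin\theta}\int_0^\infty \frac{k(t)}{\sqrt{t + 4\sin^2\theta}}\,dt$, where $z = x + iy$ and the left integral is over the upper half-plane with hyperbolic measure. -/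
open MeasureTheory

section Aux

lemma kfun_nonneg {s t : ℝ} (ht : 0 ≤ 1 + t/4) : 0 ≤ kfun s t := Real.rpow_nonneg ht _

lemma kfun_le_inv {s t : ℝ} (hs : 1 ≤ s) (ht : 0 ≤ t) : kfun s t ≤ (1 + t/4)⁻¹ := by
  have hb : (1:ℝ) ≤ 1 + t/4 := by linarith
  calc kfun s t ≤ (1 + t/4) ^ (-1 : ℝ) :=
        Real.rpow_le_rpow_of_exponent_le hb (by linarith)
    _ = (1 + t/4)⁻¹ := by rw [Real.rpow_neg_one]

lemma psi_le {s c u : ℝ} (hs : 1 ≤ s) (hc : 0 < c) (hu : 1 ≤ u) :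
    kfun s (4*c^2*(u^2-1)) ≤ (1 + (c*(u-1))^2)⁻¹ := by
  have h2 : 0 ≤ 4*c^2*(u^2-1) := by
    have : (0:ℝ) ≤ u^2 - 1 := by nlinarith
    positivity
  calc kfun s (4*c^2*(u^2-1)) ≤ (1 + (4*c^2*(u^2-1))/4)⁻¹ := kfun_le_inv hs h2
    _ ≤ (1 + (c*(u-1))^2)⁻¹ := by
        apply inv_anti₀ (by positivity)
        nlinarith

/-- The inner `φ`-integral, by the fundamental theorem of calculus. -/
lemma ftc_core {u : ℝ} (hu : 1 < u) :
    ∫ φ in Set.Ioo (-(Real.pi/2)) (Real.pi/2), (u + Real.sqrt (u^2-1) * Real.sin φ)⁻¹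
      = Real.pi := by
  set r := Real.sqrt (u^2-1) with hrdef
  have hr0 : 0 ≤ r := Real.sqrt_nonneg _
  have hr2 : r^2 = u^2 - 1 := Real.sq_sqrt (by nlinarith)
  have hru : r < u := by nlinarith
  have hpos : ∀ φ : ℝ, 0 < u + r * Real.sin φ := fun φ => by
    nlinarith [Real.neg_one_le_sin φ, Real.sin_le_one φ]
  set F : ℝ → ℝ := fun φ => 2 * Real.arctan (u * Real.tan (φ/2) + r) with hF
  have hderiv : ∀ φ ∈ Set.uIcc (-(Real.pi/2)) (Real.pi/2),
      HasDerivAt F (u + r*Real.sin φ)⁻¹ φ := by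
    intro φ hφ
    rw [Set.uIcc_of_le (by linarith [Real.pi_pos] : -(Real.pi/2) ≤ Real.pi/2)] at hφ
    have hφ2 : φ/2 ∈ Set.Ioo (-(Real.pi/2)) (Real.pi/2) := by
      constructor
      · nlinarith [hφ.1, Real.pi_pos]
      · nlinarith [hφ.2, Real.pi_pos]
    have hcos : Real.cos (φ/2) ≠ 0 := ne_of_gt (Real.cos_pos_of_mem_Ioo hφ2)
    have h1 : HasDerivAt (fun x : ℝ => x/2) (1/2) φ := by
      simpa using (hasDerivAt_id φ).div_const 2
    have h2 : HasDerivAt Real.tan (1 / Real.cos (φ/2)^2) (φ/2) := Real.hasDerivAt_tan hcos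
    have h3 : HasDerivAt (fun x : ℝ => Real.tan (x/2)) (1 / Real.cos (φ/2)^2 * (1/2)) φ :=
      HasDerivAt.comp (h := fun x : ℝ => x/2) φ h2 h1
    have h4 : HasDerivAt (fun x : ℝ => u * Real.tan (x/2) + r)
        (u * (1 / Real.cos (φ/2)^2 * (1/2))) φ := (h3.const_mul u).add_const r
    have h5 := (Real.hasDerivAt_arctan (u * Real.tan (φ/2) + r)).comp φ h4
    have h6 := h5.const_mul 2
    refine h6.congr_deriv (Eq.symm ?_)
    set S := Real.sin (φ/2) with hS
    set C := Real.cos (φ/2) with hC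
    have hsc : S^2 + C^2 = 1 := Real.sin_sq_add_cos_sq (φ/2)
    have hsin : Real.sin φ = 2 * S * C := by
      rw [show φ = 2 * (φ/2) by ring, Real.sin_two_mul]
    have htan : Real.tan (φ/2) = S / C := Real.tan_eq_sin_div_cos (φ/2)
    rw [hsin, htan]
    have hd : 0 < u + r * (2*S*C) := by have := hpos φ; rwa [hsin] at this
    have hd2 : 0 < 1 + (u * (S/C) + r)^2 := by positivity
    field_simp
    rw [div_eq_iff (by linarith [hd, show r*2*S*C = r*(2*S*C) by ring])]
    linear_combination u^2 * hsc + C^2 * hr2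
  have hint : IntervalIntegrable (fun φ => (u + r*Real.sin φ)⁻¹) volume
      (-(Real.pi/2)) (Real.pi/2) := by
    apply Continuous.intervalIntegrable
    exact (continuous_const.add (continuous_const.mul Real.continuous_sin)).inv₀
      (fun φ => ne_of_gt (hpos φ))
  have h := intervalIntegral.integral_eq_sub_of_hasDerivAt hderiv hint
  have hle : -(Real.pi/2) ≤ Real.pi/2 := by linarith [Real.pi_pos]
  rw [intervalIntegral.integral_of_le hle, MeasureTheory.integral_Ioc_eq_integral_Ioo] at h
  rw [h]
  have ht1 : Real.tan ((Real.pi/2)/2) = 1 := by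
    rw [show (Real.pi/2)/2 = Real.pi/4 by ring]; exact Real.tan_pi_div_four
  have ht2 : Real.tan ((-(Real.pi/2))/2) = -1 := by
    rw [show (-(Real.pi/2))/2 = -(Real.pi/4) by ring, Real.tan_neg, Real.tan_pi_div_four]
  rw [hF]
  simp only [ht1, ht2]
  have hur : 0 < u + r := by linarith
  have hinv : u - r = (u + r)⁻¹ := by
    rw [inv_eq_one_div, eq_div_iff (ne_of_gt hur)]; nlinarith
  have harc : Real.arctan (u * -1 + r) = -(Real.pi/2 - Real.arctan (u + r)) := by
    rw [show u * -1 + r = -(u - r) by ring, Real.arctan_neg, hinv,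
      Real.arctan_inv_of_pos hur]
  rw [harc]
  ring_nf

lemma himg {u : ℝ} (hu : 1 < u) :
    (fun φ => u + Real.sqrt (u^2-1) * Real.sin φ) '' Set.Ioo (-(Real.pi/2)) (Real.pi/2)
      = Set.Ioo (u - Real.sqrt (u^2-1)) (u + Real.sqrt (u^2-1)) := by
  set r := Real.sqrt (u^2-1) with hrdef
  have hr0 : 0 < r := Real.sqrt_pos.mpr (by nlinarith)
  have hpi : 0 < Real.pi/2 := by linarith [Real.pi_pos]
  ext y
  constructor
  · rintro ⟨φ, hφ, rfl⟩
    dsimp only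
    have h1 : Real.sin φ < 1 := by
      have := Real.strictMonoOn_sin (a := φ) (b := Real.pi/2)
        ⟨le_of_lt hφ.1, le_of_lt hφ.2⟩ ⟨by linarith, le_refl _⟩ hφ.2
      simpa using this
    have h2 : -1 < Real.sin φ := by
      have := Real.strictMonoOn_sin (a := -(Real.pi/2)) (b := φ)
        ⟨le_refl _, by linarith⟩ ⟨le_of_lt hφ.1, le_of_lt hφ.2⟩ hφ.1
      simpa using this
    constructor <;> nlinarith
  · rintro ⟨h1, h2⟩
    have hlt : (y - u)/r < 1 := by rw [div_lt_one hr0]; linarith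
    have hgt : -1 < (y - u)/r := by rw [lt_div_iff₀ hr0]; linarith
    refine ⟨Real.arcsin ((y - u)/r), ?_, ?_⟩
    · exact ⟨Real.neg_pi_div_two_lt_arcsin.mpr hgt, Real.arcsin_lt_pi_div_two.mpr hlt⟩
    · dsimp only
      rw [Real.sin_arcsin (le_of_lt hgt) (le_of_lt hlt)]
      field_simp
      ring

lemma weight_eq {u ψu : ℝ} (hu : 1 < u) :
    ∀ φ ∈ Set.Ioo (-(Real.pi/2)) (Real.pi/2),
      |Real.sqrt (u^2-1) * Real.cos φ| •
        (2 * ψu / ((u + Real.sqrt (u^2-1) * Real.sin φ) *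
          Real.sqrt (2*u*(u + Real.sqrt (u^2-1) * Real.sin φ)
            - (u + Real.sqrt (u^2-1) * Real.sin φ)^2 - 1)))
      = 2 * ψu * (u + Real.sqrt (u^2-1) * Real.sin φ)⁻¹ := by
  set r := Real.sqrt (u^2-1) with hrdef
  have hr0 : 0 < r := Real.sqrt_pos.mpr (by nlinarith)
  have hr2 : r^2 = u^2 - 1 := Real.sq_sqrt (by nlinarith)
  have hru : r < u := by nlinarith
  intro φ hφ
  have hcos : 0 < Real.cos φ := Real.cos_pos_of_mem_Ioo hφ
  have hsq : 2*u*(u + r * Real.sin φ) - (u + r * Real.sin φ)^2 - 1 = (r * Real.cos φ)^2 := by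
    have hsc := Real.sin_sq_add_cos_sq φ
    linear_combination (-1) * hr2 - r^2 * hsc
  have hpos : 0 < u + r * Real.sin φ := by
    nlinarith [Real.neg_one_le_sin φ, Real.sin_le_one φ]
  rw [hsq, Real.sqrt_sq (by positivity), abs_of_pos (by positivity), smul_eq_mul]
  field_simp

lemma yslice {u : ℝ} (ψu : ℝ) (hu : 1 < u) :
    ∫ y in Set.Ioo (u - Real.sqrt (u^2-1)) (u + Real.sqrt (u^2-1)),
      2 * ψu / (y * Real.sqrt (2*u*y - y^2 - 1)) = 2 * Real.pi * ψu := by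
  set r := Real.sqrt (u^2-1) with hrdef
  have hr0 : 0 < r := Real.sqrt_pos.mpr (by nlinarith)
  have hmono : StrictMonoOn (fun φ => u + r * Real.sin φ) (Set.Ioo (-(Real.pi/2)) (Real.pi/2)) := by
    intro a ha b hb hab
    have := Real.strictMonoOn_sin (a := a) (b := b)
      ⟨le_of_lt ha.1, le_of_lt ha.2⟩ ⟨le_of_lt hb.1, le_of_lt hb.2⟩ hab
    simpa using by nlinarith [this]
  have hder : ∀ φ ∈ Set.Ioo (-(Real.pi/2)) (Real.pi/2),
      HasDerivWithinAt (fun φ => u + r * Real.sin φ) (r * Real.cos φ)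
        (Set.Ioo (-(Real.pi/2)) (Real.pi/2)) φ := by
    intro φ _
    exact (((Real.hasDerivAt_sin φ).const_mul r).const_add u).hasDerivWithinAt
  have key := MeasureTheory.integral_image_eq_integral_abs_deriv_smul measurableSet_Ioo
      hder hmono.injOn (fun y => 2 * ψu / (y * Real.sqrt (2*u*y - y^2 - 1)))
  rw [himg hu] at key
  rw [key]
  rw [MeasureTheory.setIntegral_congr_fun measurableSet_Ioo (weight_eq hu)]
  rw [MeasureTheory.integral_const_mul, ftc_core hu]
  ring

/-- The combined integrand on the `(y, u)` plane. -/
noncomputable def Wfun (s c y u : ℝ) : ℝ :=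
  if 0 < y ∧ y^2 - 2*u*y + 1 < 0 then
    2 * kfun s (4*c^2*(u^2-1)) / (y * Real.sqrt (2*u*y - y^2 - 1)) else 0

lemma Wcond {u y : ℝ} (h : 0 < y ∧ y^2 - 2*u*y + 1 < 0) : 1 < u := by
  rcases h with ⟨hy, hlt⟩
  nlinarith [sq_nonneg (y - 1)]

lemma Wfun_nonneg {s c y u : ℝ} (hc1 : c^2 ≤ 1) : 0 ≤ Wfun s c y u := by
  unfold Wfun
  split
  · rename_i h
    apply div_nonneg
    · have : (0:ℝ) ≤ 1 + (4*c^2*(u^2-1))/4 := by nlinarith [Wcond h]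
      have := kfun_nonneg (s := s) this
      linarith
    · have := Real.sqrt_nonneg (2*u*y - y^2 - 1)
      nlinarith [h.1]
  · exact le_refl _

lemma Wfun_indicator {s c u : ℝ} (hu : 1 < u) :
    (fun y => Wfun s c y u) = Set.indicator
      (Set.Ioo (u - Real.sqrt (u^2-1)) (u + Real.sqrt (u^2-1)))
      (fun y => 2 * kfun s (4*c^2*(u^2-1)) / (y * Real.sqrt (2*u*y - y^2 - 1))) := by
  set r := Real.sqrt (u^2-1) with hrdef
  have hr0 : 0 < r := Real.sqrt_pos.mpr (by nlinarith)
  have hr2 : r^2 = u^2 - 1 := Real.sq_sqrt (by nlinarith)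
  have hru : r < u := by nlinarith
  funext y
  have hiff : (0 < y ∧ y^2 - 2*u*y + 1 < 0) ↔ y ∈ Set.Ioo (u - r) (u + r) := by
    constructor
    · rintro ⟨hy, h⟩
      constructor <;> nlinarith
    · rintro ⟨h1, h2⟩
      constructor <;> nlinarith
  unfold Wfun
  by_cases h : y ∈ Set.Ioo (u - r) (u + r)
  · rw [if_pos (hiff.mpr h), Set.indicator_of_mem h]
  · rw [if_neg (fun hh => h (hiff.mp hh)), Set.indicator_of_notMem h]

lemma Wfun_zero {s c u : ℝ} (hu : ¬ 1 < u) : (fun y => Wfun s c y u) = fun _ => 0 := by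
  funext y
  unfold Wfun
  rw [if_neg (fun h => hu (Wcond h))]

lemma Wfun_measurable {s c : ℝ} : Measurable (fun p : ℝ × ℝ => Wfun s c p.1 p.2) := by
  unfold Wfun kfun
  have hset : MeasurableSet {p : ℝ × ℝ | 0 < p.1 ∧ p.1^2 - 2*p.2*p.1 + 1 < 0} := by
    apply MeasurableSet.inter
    · exact measurableSet_lt measurable_const measurable_fst
    · have hm : Measurable fun p : ℝ × ℝ => p.1^2 - 2*p.2*p.1 + 1 := by fun_prop
      exact measurableSet_lt hm measurable_const
  exact Measurable.ite hset (by fun_prop) measurable_const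

lemma Wfun_y_integrable {s c u : ℝ} : Integrable (fun y => Wfun s c y u) := by
  by_cases hu : 1 < u
  · rw [Wfun_indicator hu]
    rw [integrable_indicator_iff measurableSet_Ioo]
    set r := Real.sqrt (u^2-1) with hrdef
    have hr0 : 0 < r := Real.sqrt_pos.mpr (by nlinarith)
    have hr2 : r^2 = u^2 - 1 := Real.sq_sqrt (by nlinarith)
    have hru : r < u := by nlinarith
    have hmono : StrictMonoOn (fun φ => u + r * Real.sin φ)
        (Set.Ioo (-(Real.pi/2)) (Real.pi/2)) := by
      intro a ha b hb hab
      have := Real.strictMonoOn_sin (a := a) (b := b)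
        ⟨le_of_lt ha.1, le_of_lt ha.2⟩ ⟨le_of_lt hb.1, le_of_lt hb.2⟩ hab
      simpa using by nlinarith [this]
    have hder : ∀ φ ∈ Set.Ioo (-(Real.pi/2)) (Real.pi/2),
        HasDerivWithinAt (fun φ => u + r * Real.sin φ) (r * Real.cos φ)
          (Set.Ioo (-(Real.pi/2)) (Real.pi/2)) φ := by
      intro φ _
      exact (((Real.hasDerivAt_sin φ).const_mul r).const_add u).hasDerivWithinAt
    rw [← himg hu]
    rw [MeasureTheory.integrableOn_image_iff_integrableOn_abs_deriv_smul measurableSet_Ioo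
      hder hmono.injOn]
    have hpos : ∀ φ : ℝ, 0 < u + r * Real.sin φ := fun φ => by
      nlinarith [Real.neg_one_le_sin φ, Real.sin_le_one φ]
    have hcont : Continuous (fun φ : ℝ => 2 * kfun s (4*c^2*(u^2-1)) *
        (u + r * Real.sin φ)⁻¹) := by
      exact continuous_const.mul ((continuous_const.add
        (continuous_const.mul Real.continuous_sin)).inv₀ (fun φ => ne_of_gt (hpos φ)))
    have hi : IntegrableOn (fun φ : ℝ => 2 * kfun s (4*c^2*(u^2-1)) *
        (u + r * Real.sin φ)⁻¹) (Set.Ioo (-(Real.pi/2)) (Real.pi/2)) :=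
      (hcont.integrableOn_Icc).mono_set Set.Ioo_subset_Icc_self
    exact hi.congr_fun (fun φ hφ => (weight_eq hu φ hφ).symm) measurableSet_Ioo
  · rw [Wfun_zero hu]
    exact integrable_zero _ _ _

lemma Wfun_y_integral {s c u : ℝ} :
    (∫ y, Wfun s c y u) = if 1 < u then 2 * Real.pi * kfun s (4*c^2*(u^2-1)) else 0 := by
  by_cases hu : 1 < u
  · rw [if_pos hu, Wfun_indicator hu, MeasureTheory.integral_indicator measurableSet_Ioo,
      yslice _ hu]
  · rw [if_neg hu, Wfun_zero hu, integral_zero]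

lemma ximg {y : ℝ} (hy : 0 < y) :
    (fun x => (x^2 + y^2 + 1)/(2*y)) '' Set.Ioi (0:ℝ) = Set.Ioi ((y^2+1)/(2*y)) := by
  ext u
  constructor
  · rintro ⟨x, hx, rfl⟩
    have hx0 : (0:ℝ) < x := hx
    have h2y : (0:ℝ) < 2*y := by linarith
    exact (div_lt_div_iff_of_pos_right h2y).mpr (by nlinarith)
  · intro hu
    have h2y : (0:ℝ) < 2*y := by linarith
    have h2 : 0 < 2*u*y - y^2 - 1 := by
      have := (div_lt_iff₀ h2y).mp hu
      nlinarith
    refine ⟨Real.sqrt (2*u*y - y^2 - 1), Real.sqrt_pos.mpr h2, ?_⟩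
    dsimp only
    rw [Real.sq_sqrt h2.le]
    field_simp
    ring

lemma xslice {s c y : ℝ} (hs : 1 < s) (hc : 0 < c) (hy : 0 < y) :
    (∫ x : ℝ, kfun s (((x ^ 2 - y ^ 2 + 1) ^ 2 + 4 * x ^ 2 * y ^ 2) / y ^ 2 * c ^ 2)) / y ^ 2
      = ∫ u : ℝ, Wfun s c y u := by
  set F : ℝ → ℝ := fun x =>
    kfun s (((x ^ 2 - y ^ 2 + 1) ^ 2 + 4 * x ^ 2 * y ^ 2) / y ^ 2 * c ^ 2) with hF
  set g : ℝ → ℝ := fun u =>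
    kfun s (4*c^2*(u^2-1)) * (y / Real.sqrt (2*u*y - y^2 - 1)) with hg
  have h1 : (∫ x : ℝ, F x) = 2 * ∫ x in Set.Ioi (0:ℝ), F x := by
    have habs : (fun x : ℝ => F |x|) = F := funext fun x => by
      simp only [hF, sq_abs]
    rw [← habs, integral_comp_abs (f := F), habs]
  have hder : ∀ x ∈ Set.Ioi (0:ℝ), HasDerivWithinAt (fun x => (x^2 + y^2 + 1)/(2*y))
      (x / y) (Set.Ioi (0:ℝ)) x := by
    intro x _
    have h := ((hasDerivAt_pow 2 x).add_const (y^2+1)).div_const (2*y)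
    have hfun : (fun x : ℝ => (x ^ 2 + (y^2+1)) / (2*y)) = (fun x : ℝ => (x^2 + y^2 + 1)/(2*y)) := by
      funext t; ring
    rw [hfun] at h
    have hxy : (2:ℝ)*x^1/(2*y) = x/y := by
      rw [pow_one, mul_div_mul_left _ _ (two_ne_zero)]
    simp only [Nat.cast_ofNat] at h
    exact (hxy ▸ h).hasDerivWithinAt
  have hmono : StrictMonoOn (fun x => (x^2 + y^2 + 1)/(2*y)) (Set.Ioi (0:ℝ)) := by
    intro a ha b hb hab
    have h2y : (0:ℝ) < 2*y := by linarith
    exact (div_lt_div_iff_of_pos_right h2y).mpr (by nlinarith [ha.out])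
  have key := MeasureTheory.integral_image_eq_integral_abs_deriv_smul measurableSet_Ioi
      hder hmono.injOn g
  rw [ximg hy] at key
  have hpt : ∀ x ∈ Set.Ioi (0:ℝ), |x / y| • g ((x^2 + y^2 + 1)/(2*y)) = F x := by
    intro x hx
    have hx0 : (0:ℝ) < x := hx
    have harg : 2*((x^2 + y^2 + 1)/(2*y))*y - y^2 - 1 = x^2 := by
      field_simp
      ring
    have hargk : 4*c^2*(((x^2 + y^2 + 1)/(2*y))^2-1)
        = ((x ^ 2 - y ^ 2 + 1) ^ 2 + 4 * x ^ 2 * y ^ 2) / y ^ 2 * c ^ 2 := by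
      field_simp
      ring
    rw [hg]
    dsimp only
    rw [harg, hargk, Real.sqrt_sq hx0.le, abs_of_pos (by positivity), smul_eq_mul, hF]
    dsimp only
    field_simp
  rw [MeasureTheory.setIntegral_congr_fun measurableSet_Ioi hpt] at key
  have hset : {u : ℝ | y^2 - 2*u*y + 1 < 0} = Set.Ioi ((y^2+1)/(2*y)) := by
    ext u
    simp only [Set.mem_setOf_eq, Set.mem_Ioi]
    rw [div_lt_iff₀ (by linarith : (0:ℝ) < 2*y)]
    constructor <;> intro h <;> nlinarith
  have hite : (fun u : ℝ => Wfun s c y u)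
      = Set.indicator (Set.Ioi ((y^2+1)/(2*y)))
          (fun u => 2 * kfun s (4*c^2*(u^2-1)) / (y * Real.sqrt (2*u*y - y^2 - 1))) := by
    funext u
    unfold Wfun
    by_cases h : y^2 - 2*u*y + 1 < 0
    · rw [if_pos ⟨hy, h⟩, Set.indicator_of_mem (by rw [← hset]; exact h)]
    · rw [if_neg (fun hh => h hh.2), Set.indicator_of_notMem (by rw [← hset]; exact h)]
  rw [hite, MeasureTheory.integral_indicator measurableSet_Ioi]
  have hreq : ∫ u in Set.Ioi ((y^2+1)/(2*y)),
        2 * kfun s (4*c^2*(u^2-1)) / (y * Real.sqrt (2*u*y - y^2 - 1))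
      = ∫ u in Set.Ioi ((y^2+1)/(2*y)), (2/y^2) * g u := by
    apply MeasureTheory.setIntegral_congr_fun measurableSet_Ioi
    intro u hu
    have h2 : 0 < 2*u*y - y^2 - 1 := by
      have := (div_lt_iff₀ (by linarith : (0:ℝ) < 2*y)).mp hu.out
      nlinarith
    have hsq : 0 < Real.sqrt (2*u*y - y^2 - 1) := Real.sqrt_pos.mpr h2
    rw [hg]
    dsimp only
    field_simp
  rw [hreq, MeasureTheory.integral_const_mul, key, h1]
  ring

lemma timg {c : ℝ} (hc : 0 < c) :
    (fun u => 4*c^2*(u^2-1)) '' Set.Ioi (1:ℝ) = Set.Ioi (0:ℝ) := by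
  ext t
  constructor
  · rintro ⟨u, hu, rfl⟩
    have hu1 : (1:ℝ) < u := hu
    dsimp only
    have : (0:ℝ) < u^2 - 1 := by nlinarith
    exact Set.mem_Ioi.mpr (by positivity)
  · intro ht
    have ht0 : (0:ℝ) < t := ht
    have ha : (1:ℝ) < 1 + t/(4*c^2) := by
      have : 0 < t/(4*c^2) := by positivity
      linarith
    refine ⟨Real.sqrt (1 + t/(4*c^2)), ?_, ?_⟩
    · exact Set.mem_Ioi.mpr ((Real.lt_sqrt (by positivity)).mpr (by nlinarith))
    · dsimp only
      rw [Real.sq_sqrt (by linarith)]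
      field_simp
      ring

lemma tsub {s c : ℝ} (hc : 0 < c) :
    (∫ t in Set.Ioi (0:ℝ), kfun s t / Real.sqrt (t + 4*c^2))
      = 4*c * ∫ u in Set.Ioi (1:ℝ), kfun s (4*c^2*(u^2-1)) := by
  have hder : ∀ u ∈ Set.Ioi (1:ℝ), HasDerivWithinAt (fun u => 4*c^2*(u^2-1))
      (8*c^2*u) (Set.Ioi (1:ℝ)) u := by
    intro u _
    have h := ((hasDerivAt_pow 2 u).sub_const 1).const_mul (4*c^2)
    norm_num at h
    have heq : HasDerivAt (fun y : ℝ => 4*c^2*(y^2-1)) (8*c^2*u) u := by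
      refine h.congr_deriv (Eq.symm ?_)
      ring
    exact heq.hasDerivWithinAt
  have hmono : StrictMonoOn (fun u => 4*c^2*(u^2-1)) (Set.Ioi (1:ℝ)) := by
    intro a ha b hb hab
    have ha1 : (1:ℝ) < a := ha
    have hc2 : 0 < c^2 := by positivity
    have h3 : a^2 < b^2 := by nlinarith
    dsimp only
    nlinarith [mul_pos hc2 (sub_pos.mpr h3)]
  have key := MeasureTheory.integral_image_eq_integral_abs_deriv_smul measurableSet_Ioi
      hder hmono.injOn (fun t => kfun s t / Real.sqrt (t + 4*c^2))
  rw [timg hc] at key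
  rw [key]
  have hpt : ∀ u ∈ Set.Ioi (1:ℝ),
      |8*c^2*u| • (kfun s (4*c^2*(u^2-1)) / Real.sqrt (4*c^2*(u^2-1) + 4*c^2))
      = 4*c * kfun s (4*c^2*(u^2-1)) := by
    intro u hu
    have hu1 : (1:ℝ) < u := hu
    have hsq : 4*c^2*(u^2-1) + 4*c^2 = (2*c*u)^2 := by ring
    rw [hsq, Real.sqrt_sq (by positivity), abs_of_pos (by positivity), smul_eq_mul]
    field_simp
    ring
  rw [MeasureTheory.setIntegral_congr_fun measurableSet_Ioi hpt,
    MeasureTheory.integral_const_mul]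

end Aux

/-- The elliptic-term evaluation in the Selberg trace formula: for `0 < θ < π`,
`∫_{ℋ} k(|z²+1|²/y² · sin²θ) dμ(z) = π/(2 sin θ) ∫_0^∞ k(t)/√(t + 4 sin²θ) dt`. -/
theorem stmt_11 (s θ : ℝ) (hs : 1 < s) (hθ0 : 0 < θ) (hθπ : θ < Real.pi) :
    (∫ y in Set.Ioi (0 : ℝ),
      (∫ x : ℝ,
        kfun s (((x ^ 2 - y ^ 2 + 1) ^ 2 + 4 * x ^ 2 * y ^ 2) / y ^ 2 *
          Real.sin θ ^ 2)) / y ^ 2) =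
    Real.pi / (2 * Real.sin θ) *
      ∫ t in Set.Ioi (0 : ℝ), kfun s t / Real.sqrt (t + 4 * Real.sin θ ^ 2) := by
  set c := Real.sin θ with hcdef
  have hc : 0 < c := Real.sin_pos_of_pos_of_lt_pi hθ0 hθπ
  have hc1 : c^2 ≤ 1 := by
    have h1 := Real.sin_le_one θ
    have h2 := Real.neg_one_le_sin θ
    nlinarith
  -- Step 1: the inner x-integral
  have step1 : (∫ y in Set.Ioi (0 : ℝ),
      (∫ x : ℝ, kfun s (((x ^ 2 - y ^ 2 + 1) ^ 2 + 4 * x ^ 2 * y ^ 2) / y ^ 2 * c ^ 2)) / y ^ 2)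
      = ∫ y in Set.Ioi (0:ℝ), ∫ u : ℝ, Wfun s c y u := by
    apply MeasureTheory.setIntegral_congr_fun measurableSet_Ioi
    intro y hy
    exact xslice hs hc hy.out
  rw [step1]
  -- Step 2: extend to the whole line
  have step2 : (∫ y in Set.Ioi (0:ℝ), ∫ u : ℝ, Wfun s c y u)
      = ∫ y : ℝ, ∫ u : ℝ, Wfun s c y u := by
    apply MeasureTheory.setIntegral_eq_integral_of_forall_compl_eq_zero
    intro y hy
    have hy0 : ¬ 0 < y := hy
    have : (fun u : ℝ => Wfun s c y u) = fun _ => 0 := by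
      funext u
      unfold Wfun
      rw [if_neg (fun h => hy0 h.1)]
    rw [this, integral_zero]
  rw [step2]
  -- Step 3: Fubini
  have hmeas : AEStronglyMeasurable (Function.uncurry (fun y u => Wfun s c y u))
      (volume.prod volume) := (Wfun_measurable).aestronglyMeasurable
  have hnorm : Integrable (fun u => ∫ y, ‖Wfun s c y u‖) := by
    have heq : (fun u => ∫ y, ‖Wfun s c y u‖)
        = Set.indicator (Set.Ioi (1:ℝ)) (fun u => 2 * Real.pi * kfun s (4*c^2*(u^2-1))) := by
      funext u
      have hW : (fun y => ‖Wfun s c y u‖) = fun y => Wfun s c y u := by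
        funext y
        rw [Real.norm_eq_abs, abs_of_nonneg (Wfun_nonneg hc1)]
      rw [hW, Wfun_y_integral]
      by_cases hu : 1 < u
      · rw [if_pos hu, Set.indicator_of_mem (Set.mem_Ioi.mpr hu)]
      · rw [if_neg hu, Set.indicator_of_notMem (fun h => hu (Set.mem_Ioi.mp h))]
    rw [heq, integrable_indicator_iff measurableSet_Ioi]
    have hbound : Integrable (fun u : ℝ => 2 * Real.pi * (1 + (c*(u-1))^2)⁻¹) := by
      have h0 : Integrable (fun x : ℝ => (1 + x^2)⁻¹) := integrable_inv_one_add_sq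
      have h1 : Integrable (fun x : ℝ => (1 + (c*x)^2)⁻¹) := by
        have := h0.comp_mul_left' (ne_of_gt hc)
        simpa using this
      have h2 : Integrable (fun x : ℝ => (1 + (c*(x-1))^2)⁻¹) := h1.comp_sub_right 1
      exact h2.const_mul _
    apply (hbound.integrableOn).mono' ?_ ?_
    · apply Measurable.aestronglyMeasurable
      unfold kfun
      fun_prop
    · filter_upwards [self_mem_ae_restrict (measurableSet_Ioi :
        MeasurableSet (Set.Ioi (1:ℝ)))] with u hu
      have hu1 : (1:ℝ) ≤ u := le_of_lt hu
      have hk0 : 0 ≤ kfun s (4*c^2*(u^2-1)) := by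
        apply kfun_nonneg
        nlinarith
      rw [Real.norm_eq_abs, abs_of_nonneg (by positivity)]
      have := psi_le (le_of_lt hs) hc hu1
      nlinarith [Real.pi_pos]
  have hInt : Integrable (Function.uncurry (fun y u => Wfun s c y u))
      (volume.prod volume) := by
    rw [MeasureTheory.integrable_prod_iff' hmeas]
    exact ⟨Filter.Eventually.of_forall (fun u => Wfun_y_integrable),
      hnorm⟩
  rw [MeasureTheory.integral_integral_swap hInt]
  -- Step 4: evaluate the y-integral
  have step4 : (∫ u : ℝ, ∫ y : ℝ, Wfun s c y u)
      = ∫ u : ℝ, Set.indicator (Set.Ioi (1:ℝ))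
          (fun u => 2 * Real.pi * kfun s (4*c^2*(u^2-1))) u := by
    apply integral_congr_ae
    apply Filter.Eventually.of_forall
    intro u
    dsimp only
    rw [Wfun_y_integral]
    by_cases hu : 1 < u
    · rw [if_pos hu, Set.indicator_of_mem (Set.mem_Ioi.mpr hu)]
    · rw [if_neg hu, Set.indicator_of_notMem (fun h => hu (Set.mem_Ioi.mp h))]
  rw [step4, MeasureTheory.integral_indicator measurableSet_Ioi,
    MeasureTheory.integral_const_mul]
  -- Step 5: the t-substitution on the right-hand side
  have hrhs : (∫ t in Set.Ioi (0:ℝ), kfun s t / Real.sqrt (t + 4 * c ^ 2))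
      = 4*c * ∫ u in Set.Ioi (1:ℝ), kfun s (4*c^2*(u^2-1)) := by
    have h := tsub (s := s) hc
    have harg : (fun t : ℝ => kfun s t / Real.sqrt (t + 4 * c ^ 2))
        = fun t => kfun s t / Real.sqrt (t + 4*c^2) := by
      funext t
      norm_num
    rw [show (4 : ℝ) * c^2 = 4*c^2 by ring] at h
    exact h
  rw [hrhs]
  field_simp
  ring
end

section
/- Let $N$ be a positive integer, $w$ a positive divisor of $N$, $u$ coprime to $w$, and suppose $A, D$ are rational numbers and $B$ a rational number such that the matrix $M = \sigma_{\frak a}\begin{pmatrix} A & B \\ 0 & D\end{pmatrix}\sigma_{\frak a}^{-1} = \begin{pmatrix} A - B L \frac uw & B L \frac{u^2}{w^2} \\ \frac wu(A - D) - BL & D + BL\frac uw\end{pmatrix}$ (where $L = \mathrm{lcm}(w^2,N)$, $\frak a = u/w$) has all entries integers with the lower-left entry divisible by $N$. Then $A$ and $D$ are integers and $\gcd(w, N/w)$ divides $A - D$. -/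
/-- If `σ_𝔞 [[A,B],[0,D]] σ_𝔞⁻¹` has integer entries with lower-left entry
divisible by `N` (where `𝔞 = u/w`, `L = lcm(w²,N)`), then `A` and `D` are
integers and `gcd(w, N/w) ∣ A - D`. -/
theorem stmt_15 (N w u : ℤ) (hN : 0 < N) (hw : 0 < w) (hu : 0 < u)
    (hwN : w ∣ N) (hcop : IsCoprime u w) (A B D : ℚ)
    (L : ℤ) (hL : L = lcm (w ^ 2) N)
    (h00 : ∃ z : ℤ, (z : ℚ) = A - B * L * (u / w))
    (h01 : ∃ z : ℤ, (z : ℚ) = B * L * u ^ 2 / w ^ 2)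
    (h10 : ∃ z : ℤ, (z : ℚ) = (w / u) * (A - D) - B * L ∧ (N : ℤ) ∣ z)
    (h11 : ∃ z : ℤ, (z : ℚ) = D + B * L * (u / w)) :
    ∃ A' D' : ℤ, (A' : ℚ) = A ∧ (D' : ℚ) = D ∧
      (Int.gcd w (N / w) : ℤ) ∣ (A' - D') := by
  obtain ⟨a, ha⟩ := h00
  obtain ⟨b, hb⟩ := h01
  obtain ⟨c, hc, hNc⟩ := h10
  obtain ⟨d, hd⟩ := h11
  have hu0 : (u : ℚ) ≠ 0 := Int.cast_ne_zero.mpr hu.ne'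
  have hw0 : (w : ℚ) ≠ 0 := Int.cast_ne_zero.mpr hw.ne'
  have hwz : w ≠ 0 := hw.ne'
  field_simp at ha hb hc hd
  -- key identity over ℚ, then ℤ
  have keyQ : (u : ℚ) ^ 2 * c = u * w * (a - d) + b * w ^ 2 := by
    linear_combination u * hc - u * ha + u * hd - hb
  have key : u ^ 2 * c = u * w * (a - d) + b * w ^ 2 := by exact_mod_cast keyQ
  have hub : u ∣ b := by
    have h1 : u ∣ b * w ^ 2 := ⟨u * c - w * (a - d), by linarith [key]⟩
    exact (hcop.pow_right).dvd_of_dvd_mul_right h1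
  obtain ⟨b', rfl⟩ := hub
  have hA : ((a + b' * w : ℤ) : ℚ) = A := by
    have : ((a : ℚ) + b' * w) * (w * u) = A * (w * u) := by
      push_cast at hb ⊢
      linear_combination u * ha + hb
    push_cast
    exact mul_right_cancel₀ (mul_ne_zero hw0 hu0) this
  have hD : ((d - b' * w : ℤ) : ℚ) = D := by
    have : ((d : ℚ) - b' * w) * (w * u) = D * (w * u) := by
      push_cast at hb ⊢
      linear_combination u * hd - hb
    push_cast
    exact mul_right_cancel₀ (mul_ne_zero hw0 hu0) this
  refine ⟨a + b' * w, d - b' * w, hA, hD, ?_⟩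
  -- integer relation: w * (A' - D') = u * c + b' * w^2
  have key2 : w * ((a + b' * w) - (d - b' * w)) = u * c + b' * w ^ 2 := by
    have : u * (w * ((a + b' * w) - (d - b' * w))) = u * (u * c + b' * w ^ 2) := by
      have := key
      ring_nf at this ⊢
      linarith [key]
    exact mul_left_cancel₀ hu.ne' this
  obtain ⟨c', rfl⟩ := hNc
  have hNw : w * (N / w) = N := Int.mul_ediv_cancel' hwN
  have key3 : (a + b' * w) - (d - b' * w) = u * (N / w) * c' + b' * w := by
    apply mul_left_cancel₀ hwz
    rw [key2]
    calc u * (N * c') + b' * w ^ 2 = u * ((w * (N / w)) * c') + b' * w ^ 2 := by rw [hNw]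
      _ = w * (u * (N / w) * c' + b' * w) := by ring
  rw [key3]
  exact dvd_add (Dvd.dvd.mul_right (Dvd.dvd.mul_left (Int.gcd_dvd_right w (N / w)) u) c')
    (Dvd.dvd.mul_left (Int.gcd_dvd_left w (N / w)) b')
end
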